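/- arXiv:1104.0327 — 3 statements merged into one kernel-verified Lean document; each statement's English description precedes it below -/
import Mathlib

section
/- Let Φ̄, α, β be independent random variables with α, β ≥ 0 bounded (β ≤ β_max a.s.), E[β] − E[α] = ε > 0, Var(α) = σ², Var(β) = ν², and suppose Φ̄ ≥ 0 has all moments finite and is a stationary point of the recursion, i.e. Φ̄' = (Φ̄ + α − β)⁺ has the same distribution as Φ̄. Let χ = Φ̄' − (Φ̄ + α − β). Then ε·E[Φ̄] = E[(α−β)²]/2 − E[χ²]/2, E[χ] = ε, and consequently E[Φ̄] ≥ (σ² + ν² + ε²)/(2ε) − β_max/2. -/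
open MeasureTheory ProbabilityTheory

theorem single_server_steady_state_lower_bound
    {Ω : Type*} [MeasurableSpace Ω] (μ : Measure Ω) [IsProbabilityMeasure μ]
    (Φ α β : Ω → ℝ) (ε σ2 ν2 αmax βmax : ℝ)
    (hmΦ : Measurable Φ) (hmα : Measurable α) (hmβ : Measurable β)
    (hindep : iIndepFun ![Φ, α, β] μ)
    (hα_nonneg : ∀ᵐ ω ∂μ, 0 ≤ α ω) (hβ_nonneg : ∀ᵐ ω ∂μ, 0 ≤ β ω)
    (hα_bdd : ∀ᵐ ω ∂μ, α ω ≤ αmax) (hβ_bdd : ∀ᵐ ω ∂μ, β ω ≤ βmax)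
    (hΦ_nonneg : ∀ᵐ ω ∂μ, 0 ≤ Φ ω)
    (hε : (∫ ω, β ω ∂μ) - (∫ ω, α ω ∂μ) = ε) (hε_pos : 0 < ε)
    (hvarα : variance α μ = σ2) (hvarβ : variance β μ = ν2)
    (hmoments : ∀ n : ℕ, Integrable (fun ω => (Φ ω) ^ n) μ)
    (hstat : IdentDistrib (fun ω => max (Φ ω + α ω - β ω) 0) Φ μ μ) :
    ε * (∫ ω, Φ ω ∂μ) =
        (∫ ω, (α ω - β ω) ^ 2 ∂μ) / 2 -
          (∫ ω, (max (Φ ω + α ω - β ω) 0 - (Φ ω + α ω - β ω)) ^ 2 ∂μ) / 2 ∧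
      (∫ ω, (max (Φ ω + α ω - β ω) 0 - (Φ ω + α ω - β ω)) ∂μ) = ε ∧
      (σ2 + ν2 + ε ^ 2) / (2 * ε) - βmax / 2 ≤ ∫ ω, Φ ω ∂μ := by
  -- basic integrability from boundedness
  have intBdd : ∀ (f : Ω → ℝ) (C : ℝ), Measurable f → (∀ᵐ ω ∂μ, |f ω| ≤ C) →
      Integrable f μ := fun f C hm hb =>
    (integrable_const C).mono' hm.aestronglyMeasurable (by simpa using hb)
  have habs : ∀ᵐ ω ∂μ, |α ω| ≤ αmax := by
    filter_upwards [hα_nonneg, hα_bdd] with ω h1 h2; rwa [abs_of_nonneg h1]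
  have hbabs : ∀ᵐ ω ∂μ, |β ω| ≤ βmax := by
    filter_upwards [hβ_nonneg, hβ_bdd] with ω h1 h2; rwa [abs_of_nonneg h1]
  have intα : Integrable α μ := intBdd α αmax hmα habs
  have intβ : Integrable β μ := intBdd β βmax hmβ hbabs
  have intα2 : Integrable (fun ω => α ω ^ 2) μ := by
    refine intBdd _ (αmax ^ 2) (hmα.pow_const 2) ?_
    filter_upwards [habs] with ω h
    rw [abs_pow]; exact pow_le_pow_left₀ (abs_nonneg _) h 2
  have intβ2 : Integrable (fun ω => β ω ^ 2) μ := by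
    refine intBdd _ (βmax ^ 2) (hmβ.pow_const 2) ?_
    filter_upwards [hbabs] with ω h
    rw [abs_pow]; exact pow_le_pow_left₀ (abs_nonneg _) h 2
  have intΦ : Integrable Φ μ := by simpa using hmoments 1
  have intΦ2 : Integrable (fun ω => Φ ω ^ 2) μ := hmoments 2
  -- pairwise independence
  have iΦα : IndepFun Φ α μ := by
    have := hindep.indepFun (i := 0) (j := 1) (by decide)
    simpa using this
  have iΦβ : IndepFun Φ β μ := by
    have := hindep.indepFun (i := 0) (j := 2) (by decide)
    simpa using this
  have iαβ : IndepFun α β μ := by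
    have := hindep.indepFun (i := 1) (j := 2) (by decide)
    simpa using this
  have intΦα : Integrable (fun ω => Φ ω * α ω) μ :=
    iΦα.integrable_mul intΦ intα
  have intΦβ : Integrable (fun ω => Φ ω * β ω) μ :=
    iΦβ.integrable_mul intΦ intβ
  have intαβ : Integrable (fun ω => α ω * β ω) μ :=
    iαβ.integrable_mul intα intβ
  have eΦα : (∫ ω, Φ ω * α ω ∂μ) = (∫ ω, Φ ω ∂μ) * ∫ ω, α ω ∂μ :=
    iΦα.integral_mul_eq_mul_integral intΦ.1 intα.1
  have eΦβ : (∫ ω, Φ ω * β ω ∂μ) = (∫ ω, Φ ω ∂μ) * ∫ ω, β ω ∂μ :=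
    iΦβ.integral_mul_eq_mul_integral intΦ.1 intβ.1
  have eαβ : (∫ ω, α ω * β ω ∂μ) = (∫ ω, α ω ∂μ) * ∫ ω, β ω ∂μ :=
    iαβ.integral_mul_eq_mul_integral intα.1 intβ.1
  -- the drift D and overshoot χ
  set D : Ω → ℝ := fun ω => Φ ω + α ω - β ω with hD
  set χ : Ω → ℝ := fun ω => max (D ω) 0 - D ω with hχ
  have hmD : Measurable D := (hmΦ.add hmα).sub hmβ
  have hmχ : Measurable χ := (hmD.max measurable_const).sub hmD
  have hχ_nonneg : ∀ ω, 0 ≤ χ ω := fun ω => by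
    simp only [hχ]; exact sub_nonneg.2 (le_max_left _ _)
  have hβmax_nonneg : 0 ≤ βmax := by
    obtain ⟨ω0, h0, h1⟩ := (hβ_nonneg.and hβ_bdd).exists
    linarith
  have hχ_bdd : ∀ᵐ ω ∂μ, χ ω ≤ βmax := by
    filter_upwards [hα_nonneg, hβ_bdd, hΦ_nonneg] with ω h1 h2 h3
    simp only [hχ, hD]
    rcases le_or_gt 0 (Φ ω + α ω - β ω) with h | h
    · rw [max_eq_left h]; simpa using hβmax_nonneg
    · rw [max_eq_right h.le]; linarith
  have hχabs : ∀ᵐ ω ∂μ, |χ ω| ≤ βmax := by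
    filter_upwards [hχ_bdd] with ω h
    rwa [abs_of_nonneg (hχ_nonneg ω)]
  have intχ : Integrable χ μ := intBdd χ βmax hmχ hχabs
  have intχ2 : Integrable (fun ω => χ ω ^ 2) μ := by
    refine intBdd _ (βmax ^ 2) (hmχ.pow_const 2) ?_
    filter_upwards [hχabs] with ω h
    rw [abs_pow]; exact pow_le_pow_left₀ (abs_nonneg _) h 2
  -- Φ' and its integrability
  set Φ' : Ω → ℝ := fun ω => max (D ω) 0 with hΦ'
  have intΦ' : Integrable Φ' μ := (hstat.integrable_iff).2 intΦ
  have intD : Integrable D μ := (intΦ.add intα).sub intβ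
  have eΦ' : (∫ ω, Φ' ω ∂μ) = ∫ ω, Φ ω ∂μ := hstat.integral_eq
  -- the mean of χ is ε
  have eχ : (∫ ω, χ ω ∂μ) = ε := by
    have h1 : (∫ ω, χ ω ∂μ) = (∫ ω, Φ' ω ∂μ) - ∫ ω, D ω ∂μ := integral_sub intΦ' intD
    have h2 : (∫ ω, D ω ∂μ) = (∫ ω, Φ ω ∂μ) + (∫ ω, α ω ∂μ) - ∫ ω, β ω ∂μ := by
      simp only [hD]
      rw [integral_sub (show Integrable (fun ω => Φ ω + α ω) μ from intΦ.add intα) intβ,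
        integral_add intΦ intα]
    rw [h1, h2, eΦ']
    linarith
  -- second moment identity : Φ'^2 = D^2 - χ^2 pointwise
  have hpt : ∀ ω, Φ' ω ^ 2 = D ω ^ 2 - χ ω ^ 2 := by
    intro ω
    simp only [hΦ', hχ]
    rcases le_or_gt 0 (D ω) with h | h
    · rw [max_eq_left h]; ring
    · rw [max_eq_right h.le]; ring
  have intab2 : Integrable (fun ω => (α ω - β ω) ^ 2) μ := by
    have : Integrable (fun ω => α ω ^ 2 - 2 * (α ω * β ω) + β ω ^ 2) μ :=
      (intα2.sub (intαβ.const_mul 2)).add intβ2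
    exact this.congr (Filter.Eventually.of_forall fun ω => by ring)
  have intD2 : Integrable (fun ω => D ω ^ 2) μ := by
    have : Integrable (fun ω =>
        (Φ ω ^ 2 + 2 * (Φ ω * α ω) + (α ω - β ω) ^ 2) - 2 * (Φ ω * β ω)) μ :=
      ((intΦ2.add (intΦα.const_mul 2)).add intab2).sub (intΦβ.const_mul 2)
    exact this.congr (Filter.Eventually.of_forall fun ω => by simp only [hD]; ring)
  have eD2 : (∫ ω, D ω ^ 2 ∂μ) =
      (∫ ω, Φ ω ^ 2 ∂μ) + 2 * ((∫ ω, Φ ω ∂μ) * ∫ ω, α ω ∂μ)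
        - 2 * ((∫ ω, Φ ω ∂μ) * ∫ ω, β ω ∂μ) + ∫ ω, (α ω - β ω) ^ 2 ∂μ := by
    have h1 : (∫ ω, D ω ^ 2 ∂μ) = ∫ ω,
        ((Φ ω ^ 2 + 2 * (Φ ω * α ω) + (α ω - β ω) ^ 2) - 2 * (Φ ω * β ω)) ∂μ :=
      integral_congr_ae (Filter.Eventually.of_forall fun ω => by simp only [hD]; ring)
    rw [h1,
      integral_sub
        (show Integrable (fun ω => Φ ω ^ 2 + 2 * (Φ ω * α ω) + (α ω - β ω) ^ 2) μ from
          (intΦ2.add (intΦα.const_mul 2)).add intab2) (intΦβ.const_mul 2),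
      integral_add
        (show Integrable (fun ω => Φ ω ^ 2 + 2 * (Φ ω * α ω)) μ from
          intΦ2.add (intΦα.const_mul 2)) intab2,
      integral_add intΦ2 (intΦα.const_mul 2), integral_const_mul 2 _, integral_const_mul 2 _,
      eΦα, eΦβ]
    ring
  have e2 : (∫ ω, Φ' ω ^ 2 ∂μ) = ∫ ω, Φ ω ^ 2 ∂μ :=
    (hstat.comp (measurable_id.pow_const 2)).integral_eq
  have key : (∫ ω, Φ ω ^ 2 ∂μ) = (∫ ω, D ω ^ 2 ∂μ) - ∫ ω, χ ω ^ 2 ∂μ := by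
    rw [← e2, ← integral_sub intD2 intχ2]
    exact integral_congr_ae (Filter.Eventually.of_forall hpt)
  -- part 1
  have part1 : ε * (∫ ω, Φ ω ∂μ) =
      (∫ ω, (α ω - β ω) ^ 2 ∂μ) / 2 - (∫ ω, χ ω ^ 2 ∂μ) / 2 := by
    have h0 : (0:ℝ) = 2 * ((∫ ω, Φ ω ∂μ) * ∫ ω, α ω ∂μ)
        - 2 * ((∫ ω, Φ ω ∂μ) * ∫ ω, β ω ∂μ)
        + (∫ ω, (α ω - β ω) ^ 2 ∂μ) - ∫ ω, χ ω ^ 2 ∂μ := by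
      rw [eD2] at key; linarith
    linear_combination h0 / 2 - (∫ ω, Φ ω ∂μ) * hε
  -- E[(α-β)^2] = σ2 + ν2 + ε²
  have memα2 : MemLp α 2 μ :=
    (memLp_top_of_bound hmα.aestronglyMeasurable αmax
      (by simpa using habs)).mono_exponent le_top
  have memβ2 : MemLp β 2 μ :=
    (memLp_top_of_bound hmβ.aestronglyMeasurable βmax
      (by simpa using hbabs)).mono_exponent le_top
  have hvα : σ2 = (∫ ω, α ω ^ 2 ∂μ) - (∫ ω, α ω ∂μ) ^ 2 := by
    rw [← hvarα, variance_eq_sub memα2]; simp [Pi.pow_apply]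
  have hvβ : ν2 = (∫ ω, β ω ^ 2 ∂μ) - (∫ ω, β ω ∂μ) ^ 2 := by
    rw [← hvarβ, variance_eq_sub memβ2]; simp [Pi.pow_apply]
  have eab2 : (∫ ω, (α ω - β ω) ^ 2 ∂μ) = σ2 + ν2 + ε ^ 2 := by
    have h1 : (∫ ω, (α ω - β ω) ^ 2 ∂μ)
        = ∫ ω, (α ω ^ 2 - 2 * (α ω * β ω) + β ω ^ 2) ∂μ :=
      integral_congr_ae (Filter.Eventually.of_forall fun ω => by ring)
    rw [h1,
      integral_add
        (show Integrable (fun ω => α ω ^ 2 - 2 * (α ω * β ω)) μ from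
          intα2.sub (intαβ.const_mul 2)) intβ2,
      integral_sub intα2 (intαβ.const_mul 2), integral_const_mul 2 _, eαβ]
    rw [hvα, hvβ]
    linear_combination ((∫ ω, β ω ∂μ) - (∫ ω, α ω ∂μ) + ε) * hε
  -- bound on E[χ²]
  have hχ2le : (∫ ω, χ ω ^ 2 ∂μ) ≤ βmax * ε := by
    have h1 : (∫ ω, χ ω ^ 2 ∂μ) ≤ ∫ ω, βmax * χ ω ∂μ := by
      refine integral_mono_ae intχ2 (intχ.const_mul βmax) ?_
      filter_upwards [hχ_bdd] with ω h
      have := hχ_nonneg ω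
      nlinarith
    rwa [integral_const_mul βmax _, eχ] at h1
  refine ⟨part1, eχ, ?_⟩
  have h2ε : (0:ℝ) < 2 * ε := by linarith
  rw [sub_le_iff_le_add, div_le_iff₀ h2ε]
  rw [eab2] at part1
  nlinarith [part1, hχ2le]
end

section
/- Let Q ∈ ℝ₊^L with Q ≠ 0, let λ ∈ ℝ^L with λ_l > δ > 0 for all l, and let Q_min = min_l Q_l. Then λ_Σ·Q_min − ⟨Q, λ⟩ ≤ −δ·‖Q − (Q_Σ/L)·1‖, where λ_Σ = Σ_l λ_l, Q_Σ = Σ_l Q_l, and 1 is the all-ones vector. -/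
open scoped RealInnerProductSpace

theorem jsq_collapse_key_inequality {L : ℕ} [NeZero L]
    (Q lam : EuclideanSpace ℝ (Fin L)) (δ : ℝ)
    (hQ_nonneg : ∀ l, 0 ≤ Q l) (hQ_ne : Q ≠ 0)
    (hδ_pos : 0 < δ) (hlam : ∀ l, δ < lam l) :
    (∑ l, lam l) * (Finset.univ.inf' Finset.univ_nonempty Q) - ⟪Q, lam⟫ ≤
      -δ * ‖Q - (WithLp.equiv 2 (Fin L → ℝ)).symm (fun _ => (∑ l, Q l) / L)‖ := by
  set m : ℝ := Finset.univ.inf' Finset.univ_nonempty Q with hm_def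
  have hm : ∀ l, m ≤ Q l := fun l => Finset.inf'_le _ (Finset.mem_univ l)
  set c : ℝ := (∑ l, Q l) / L with hc_def
  set u : EuclideanSpace ℝ (Fin L) :=
    Q - (WithLp.equiv 2 (Fin L → ℝ)).symm (fun _ => c) with hu_def
  set w : EuclideanSpace ℝ (Fin L) :=
    Q - (WithLp.equiv 2 (Fin L → ℝ)).symm (fun _ => m) with hw_def
  have hL : (L : ℝ) ≠ 0 := Nat.cast_ne_zero.mpr (NeZero.ne L)
  have hu_apply : ∀ l, u l = Q l - c := by intro l; rfl
  have hw_apply : ∀ l, w l = Q l - m := by intro l; rfl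
  -- Step C : ‖u‖ ≤ ‖w‖
  have ones : EuclideanSpace ℝ (Fin L) := (WithLp.equiv 2 (Fin L → ℝ)).symm (fun _ => 1)
  have hC : ‖u‖ ≤ ‖w‖ := by
    set v : EuclideanSpace ℝ (Fin L) :=
      (WithLp.equiv 2 (Fin L → ℝ)).symm (fun _ => c - m) with hv_def
    have hwv : w = u + v := by
      apply PiLp.ext
      intro l
      show w l = u l + v l
      rw [hu_apply, hw_apply]
      show Q l - m = Q l - c + (c - m)
      ring
    have horth : ⟪u, v⟫ = 0 := by
      rw [PiLp.inner_apply]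
      have : ∀ l, (inner ℝ (u l) (v l) : ℝ) = (Q l - c) * (c - m) := by
        intro l
        rw [RCLike.inner_apply, starRingEnd_apply, star_trivial, hu_apply]
        exact mul_comm _ _
      rw [Finset.sum_congr rfl (fun l _ => this l), ← Finset.sum_mul]
      have : ∑ l, (Q l - c) = 0 := by
        rw [Finset.sum_sub_distrib, Finset.sum_const, Finset.card_univ,
          Fintype.card_fin, nsmul_eq_mul, hc_def]
        field_simp
        ring
      rw [this, zero_mul]
    have hsq : ‖w‖ ^ 2 = ‖u‖ ^ 2 + ‖v‖ ^ 2 := by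
      rw [hwv, norm_add_sq_real, horth]
      ring
    have : ‖u‖ ^ 2 ≤ ‖w‖ ^ 2 := by
      rw [hsq]
      nlinarith [sq_nonneg ‖v‖]
    nlinarith [norm_nonneg u, norm_nonneg w]
  -- Step B : ‖w‖ ≤ ∑ (Q l - m)
  have hB : ‖w‖ ≤ ∑ l, (Q l - m) := by
    have hnn : ∀ l, 0 ≤ Q l - m := fun l => sub_nonneg.mpr (hm l)
    have hsum_nn : 0 ≤ ∑ l, (Q l - m) := Finset.sum_nonneg fun l _ => hnn l
    have h1 : ‖w‖ ^ 2 ≤ (∑ l, (Q l - m)) ^ 2 := by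
      have : ‖w‖ ^ 2 = ∑ l, (Q l - m) ^ 2 := by
        rw [EuclideanSpace.norm_eq]
        rw [Real.sq_sqrt (Finset.sum_nonneg fun l _ => sq_nonneg _)]
        apply Finset.sum_congr rfl
        intro l _
        rw [hw_apply, Real.norm_eq_abs, sq_abs]
      rw [this, sq, Finset.sum_mul]
      apply Finset.sum_le_sum
      intro l _
      rw [sq]
      exact mul_le_mul_of_nonneg_left
        (Finset.single_le_sum (fun j _ => hnn j) (Finset.mem_univ l)) (hnn l)
    nlinarith [norm_nonneg w]
  -- Step A
  have hA : (∑ l, lam l) * m - ⟪Q, lam⟫ ≤ -δ * ∑ l, (Q l - m) := by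
    have hinner : ⟪Q, lam⟫ = ∑ l, Q l * lam l := by
      rw [PiLp.inner_apply]; simp only [RCLike.inner_apply, conj_trivial, mul_comm]
    have key : ∑ l, δ * (Q l - m) ≤ ∑ l, lam l * (Q l - m) := by
      apply Finset.sum_le_sum
      intro l _
      exact mul_le_mul_of_nonneg_right (hlam l).le (sub_nonneg.mpr (hm l))
    have e1 : ∑ l, lam l * (Q l - m) = (∑ l, Q l * lam l) - (∑ l, lam l) * m := by
      rw [Finset.sum_mul, ← Finset.sum_sub_distrib]
      apply Finset.sum_congr rfl
      intro l _
      ring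
    have e2 : ∑ l, δ * (Q l - m) = δ * ∑ l, (Q l - m) := by
      rw [Finset.mul_sum]
    rw [hinner]
    linarith [key, e1 ▸ key]
  calc (∑ l, lam l) * m - ⟪Q, lam⟫ ≤ -δ * ∑ l, (Q l - m) := hA
    _ ≤ -δ * ‖w‖ := by
        apply mul_le_mul_of_nonpos_left hB (by linarith)
    _ ≤ -δ * ‖u‖ := by
        apply mul_le_mul_of_nonpos_left hC (by linarith)
end

section
/- Let c ∈ ℝ^L be a nonnegative unit vector and let Q⁺, U ∈ ℝ₊^L satisfy Q⁺_l U_l = 0 for all l, with U_l ≤ S_max for all l. For random vectors Q⁺, U with finite second moments and Q⁺⊥ = Q⁺ − ⟨c,Q⁺⟩c, one has E[⟨c, Q⁺⟩⟨c, U⟩] ≤ √( E[‖Q⁺⊥‖²] · E[‖U‖²] ). -/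
open MeasureTheory
open scoped RealInnerProductSpace

/-- Cauchy–Schwarz for integrals of nonnegative functions. -/
lemma cs_integral_aux {Ω : Type*} [MeasurableSpace Ω] (μ : Measure Ω)
    (f g : Ω → ℝ) (hf : ∀ ω, 0 ≤ f ω) (hg : ∀ ω, 0 ≤ g ω)
    (hf2 : Integrable (fun ω => f ω ^ 2) μ) (hg2 : Integrable (fun ω => g ω ^ 2) μ)
    (hfg : Integrable (fun ω => f ω * g ω) μ) :
    (∫ ω, f ω * g ω ∂μ) ≤ Real.sqrt ((∫ ω, f ω ^ 2 ∂μ) * ∫ ω, g ω ^ 2 ∂μ) := by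
  set A := ∫ ω, f ω ^ 2 ∂μ with hA_def
  set B := ∫ ω, g ω ^ 2 ∂μ with hB_def
  have hA0 : 0 ≤ A := integral_nonneg fun ω => sq_nonneg _
  have hB0 : 0 ≤ B := integral_nonneg fun ω => sq_nonneg _
  rcases eq_or_lt_of_le hA0 with hA | hA
  · -- A = 0 : f = 0 a.e.
    have hfz : (fun ω => f ω ^ 2) =ᵐ[μ] 0 := by
      rw [← integral_eq_zero_iff_of_nonneg (fun ω => sq_nonneg (f ω)) hf2]
      exact hA.symm
    have : (fun ω => f ω * g ω) =ᵐ[μ] 0 := by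
      filter_upwards [hfz] with ω hω
      have hz : f ω ^ 2 = 0 := hω
      have : f ω = 0 := by
        have := sq_nonneg (f ω); nlinarith [hf ω]
      simp [this]
    rw [integral_congr_ae this]
    simpa using Real.sqrt_nonneg (A * B)
  rcases eq_or_lt_of_le hB0 with hB | hB
  · -- B = 0 : g = 0 a.e.
    have hgz : (fun ω => g ω ^ 2) =ᵐ[μ] 0 := by
      rw [← integral_eq_zero_iff_of_nonneg (fun ω => sq_nonneg (g ω)) hg2]
      exact hB.symm
    have : (fun ω => f ω * g ω) =ᵐ[μ] 0 := by
      filter_upwards [hgz] with ω hω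
      have hz : g ω ^ 2 = 0 := hω
      have : g ω = 0 := by
        have := sq_nonneg (g ω); nlinarith [hg ω]
      simp [this]
    rw [integral_congr_ae this]
    simpa using Real.sqrt_nonneg (A * B)
  -- main case A > 0, B > 0
  set t := Real.sqrt (B / A) with ht_def
  have ht : 0 < t := Real.sqrt_pos.2 (div_pos hB hA)
  have ht2 : t ^ 2 = B / A := Real.sq_sqrt (div_nonneg hB0 hA0)
  have hpt : ∀ ω, f ω * g ω ≤ (t * f ω ^ 2 + g ω ^ 2 / t) / 2 := by
    intro ω
    have h := sq_nonneg (t * f ω - g ω)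
    rw [le_div_iff₀ (by norm_num : (0:ℝ) < 2), ← sub_nonneg]
    have : t * f ω ^ 2 + g ω ^ 2 / t - f ω * g ω * 2
        = (t * f ω - g ω) ^ 2 / t := by field_simp; ring
    rw [this]
    positivity
  have hint : Integrable (fun ω => (t * f ω ^ 2 + g ω ^ 2 / t) / 2) μ :=
    ((hf2.const_mul t).add (hg2.div_const t)).div_const 2
  have hle : (∫ ω, f ω * g ω ∂μ) ≤ ∫ ω, (t * f ω ^ 2 + g ω ^ 2 / t) / 2 ∂μ :=
    integral_mono hfg hint hpt
  have hval : (∫ ω, (t * f ω ^ 2 + g ω ^ 2 / t) / 2 ∂μ)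
      = (t * A + B / t) / 2 := by
    rw [integral_div, integral_add (hf2.const_mul t) (hg2.div_const t),
      integral_const_mul, integral_div]
  have h1 : t * A = Real.sqrt (A * B) := by
    have : t * A = Real.sqrt ((B / A) * A ^ 2) := by
      rw [Real.sqrt_mul (div_nonneg hB0 hA0), Real.sqrt_sq hA0]
    rw [this]
    congr 1
    field_simp
  have h2 : B / t = t * A := by
    rw [div_eq_iff ht.ne']
    have : t * A * t = t ^ 2 * A := by ring
    rw [this, ht2]
    field_simp
  calc (∫ ω, f ω * g ω ∂μ) ≤ (t * A + B / t) / 2 := by rw [← hval]; exact hle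
    _ = Real.sqrt (A * B) := by rw [h2, h1]; ring

theorem unused_service_cross_term_bound {L : ℕ}
    {Ω : Type*} [MeasurableSpace Ω] (μ : Measure Ω) [IsProbabilityMeasure μ]
    (Qp U : Ω → EuclideanSpace ℝ (Fin L)) (c : EuclideanSpace ℝ (Fin L)) (Smax : ℝ)
    (hc_nonneg : ∀ l, 0 ≤ c l) (hc_norm : ‖c‖ = 1)
    (hQp_nonneg : ∀ ω, ∀ l, 0 ≤ Qp ω l) (hU_nonneg : ∀ ω, ∀ l, 0 ≤ U ω l)
    (hU_bdd : ∀ ω, ∀ l, U ω l ≤ Smax)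
    (hslack : ∀ ω, ∀ l, Qp ω l * U ω l = 0)
    (hint1 : Integrable (fun ω => ‖Qp ω - ⟪c, Qp ω⟫ • c‖ ^ 2) μ)
    (hint2 : Integrable (fun ω => ‖U ω‖ ^ 2) μ)
    (hint3 : Integrable (fun ω => ⟪c, Qp ω⟫ * ⟪c, U ω⟫) μ) :
    (∫ ω, ⟪c, Qp ω⟫ * ⟪c, U ω⟫ ∂μ) ≤
      Real.sqrt ((∫ ω, ‖Qp ω - ⟪c, Qp ω⟫ • c‖ ^ 2 ∂μ) * ∫ ω, ‖U ω‖ ^ 2 ∂μ) := by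
  set f := fun ω => ‖Qp ω - ⟪c, Qp ω⟫ • c‖ with hf_def
  set g := fun ω => ‖U ω‖ with hg_def
  -- inner product of Qp and U vanishes by complementary slackness
  have hQU : ∀ ω, ⟪Qp ω, U ω⟫ = 0 := by
    intro ω
    simp only [PiLp.inner_apply, RCLike.inner_apply, conj_trivial]
    exact Finset.sum_eq_zero fun l _ => (mul_comm _ _).trans (hslack ω l)
  -- pointwise bound
  have key : ∀ ω, ⟪c, Qp ω⟫ * ⟪c, U ω⟫ ≤ f ω * g ω := by
    intro ω
    have hid : ⟪c, Qp ω⟫ * ⟪c, U ω⟫ = ⟪-(Qp ω - ⟪c, Qp ω⟫ • c), U ω⟫ := by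
      rw [inner_neg_left, inner_sub_left, real_inner_smul_left, hQU ω]
      ring
    rw [hid]
    calc ⟪-(Qp ω - ⟪c, Qp ω⟫ • c), U ω⟫ ≤ ‖-(Qp ω - ⟪c, Qp ω⟫ • c)‖ * ‖U ω‖ :=
          real_inner_le_norm _ _
      _ = f ω * g ω := by rw [norm_neg]
  -- measurability of f, g
  have hfm : AEStronglyMeasurable f μ := by
    have := hint1.aestronglyMeasurable
    have h := Real.continuous_sqrt.comp_aestronglyMeasurable this
    refine h.congr ?_
    filter_upwards with ω
    simp [Real.sqrt_sq (norm_nonneg _), hf_def]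
  have hgm : AEStronglyMeasurable g μ := by
    have := hint2.aestronglyMeasurable
    have h := Real.continuous_sqrt.comp_aestronglyMeasurable this
    refine h.congr ?_
    filter_upwards with ω
    simp [Real.sqrt_sq (norm_nonneg _), hg_def]
  -- integrability of f * g
  have hfg : Integrable (fun ω => f ω * g ω) μ := by
    refine Integrable.mono' ((hint1.add hint2).div_const 2) (hfm.mul hgm) ?_
    filter_upwards with ω
    have h1 : 0 ≤ f ω := norm_nonneg _
    have h2 : 0 ≤ g ω := norm_nonneg _
    rw [Real.norm_of_nonneg (mul_nonneg h1 h2)]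
    have he : ((fun ω => ‖Qp ω - ⟪c, Qp ω⟫ • c‖ ^ 2) + fun ω => ‖U ω‖ ^ 2) ω / 2
        = (f ω ^ 2 + g ω ^ 2) / 2 := rfl
    rw [he]
    nlinarith [sq_nonneg (f ω - g ω)]
  have step1 : (∫ ω, ⟪c, Qp ω⟫ * ⟪c, U ω⟫ ∂μ) ≤ ∫ ω, f ω * g ω ∂μ :=
    integral_mono hint3 hfg key
  have step2 := cs_integral_aux μ f g (fun ω => norm_nonneg _) (fun ω => norm_nonneg _)
    hint1 hint2 hfg
  exact step1.trans step2
end
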